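/- Let φ be a coalitionally strategy-proof social choice function defined on all profiles whose range is {a,b} ⊆ A of cardinality two. Let π be a profile of unanimous indifference between a and b, and set x = φ(π). Then there exists a double collection ⟨(π^λ)_{0≤λ<β}, (F_λ)_{0≤λ<β}⟩ with respect to {a,b} such that φ coincides with the ψ-type function associated with x and this double collection; moreover, the families F₀ and its dual F₀° are both nonempty (they consist of coalitions), and the ordinal β is finite whenever both V and A are finite. -/

import Mathlib

universe u v

variable {V : Type u} {A : Type v}

/-- A weak ordering on `A`: a complete (total) and transitive binary relation. -/
abbrev WeakOrd (A : Type v) := {W : A → A → Prop // Total W ∧ Transitive W}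

/-- A profile assigns to every voter a weak ordering on the alternatives. -/
abbrev Profile (V : Type u) (A : Type v) := V → WeakOrd A

/-- Strict preference `x ≻_W y`. -/
def SPref (W : WeakOrd A) (x y : A) : Prop := W.1 x y ∧ ¬ W.1 y x

/-- Indifference `x ∼_W y`. -/
def Indiff (W : WeakOrd A) (x y : A) : Prop := W.1 x y ∧ W.1 y x

/-- `D(a,P)` (relative to the pair `{a,b}`): voters strictly preferring `a` to `b`. -/
def Dset (a b : A) (P : Profile V A) : Set V := {v | SPref (P v) a b}

/-- `I(P)`: voters indifferent between `a` and `b`. -/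
def Iset (a b : A) (P : Profile V A) : Set V := {v | Indiff (P v) a b}

/-- The `{a,b}`-equivalence set `E(P,Q)`. -/
def Eset (a b : A) (P Q : Profile V A) : Set V :=
  {v | P v = Q v ∨ (SPref (P v) a b ∧ SPref (Q v) a b) ∨ (SPref (P v) b a ∧ SPref (Q v) b a)}

/-- `P ⊐_a Q`. -/
def DomA (a b : A) (P Q : Profile V A) : Prop :=
  (Set.univ : Set V) = Eset a b P Q ∪ (Iset a b P ∩ Dset a b Q)

/-- `P ⊐_b Q`. -/
def DomB (a b : A) (P Q : Profile V A) : Prop :=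
  (Set.univ : Set V) = Eset a b P Q ∪ (Iset a b P ∩ Dset b a Q)

/-- The coalition `D` can manipulate the profile `P` under `φ`. -/
def Manipulates (φ : Profile V A → A) (D : Set V) (P : Profile V A) : Prop :=
  D.Nonempty ∧ ∃ Q : Profile V A, (∀ v ∉ D, Q v = P v) ∧ ∀ v ∈ D, SPref (P v) (φ Q) (φ P)

/-- Coalitional strategy-proofness. -/
def CSP (φ : Profile V A → A) : Prop :=
  ∀ (D : Set V) (P : Profile V A), ¬ Manipulates φ D P

/-- A superset-closed family on the set `Wset`. -/
def SSCF (Wset : Set V) (F : Set (Set V)) : Prop :=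
  (∀ E ∈ F, E ⊆ Wset) ∧ ∀ E₁ E₂ : Set V, E₁ ∈ F → E₁ ⊆ E₂ → E₂ ⊆ Wset → E₂ ∈ F

/-- The dual family `F°` of `F` on `Wset`. -/
def dualF (Wset : Set V) (F : Set (Set V)) : Set (Set V) :=
  {E | E ⊆ Wset ∧ Wset \ E ∉ F}

/-- The class `𝓟_a(π,F)`, where the partial `{a,b}`-indifference profile `π` has domain `I`. -/
def ClassA (a b : A) (I : Set V) (pc : V → WeakOrd A) (F : Set (Set V)) :
    Set (Profile V A) :=
  {P | Dset a b P ∩ Iᶜ ∈ F ∧ ∀ v ∈ I, P v = pc v ∨ SPref (P v) a b}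

/-- The class `𝓟_b(π,F)`, where the partial `{a,b}`-indifference profile `π` has domain `I`. -/
def ClassB (a b : A) (I : Set V) (pc : V → WeakOrd A) (F : Set (Set V)) :
    Set (Profile V A) :=
  {P | Dset b a P ∩ Iᶜ ∈ dualF Iᶜ F ∧ ∀ v ∈ I, P v = pc v ∨ SPref (P v) b a}

/-- `𝓟_λ = 𝓟_a(π,F) ∪ 𝓟_b(π,F)`. -/
def PClass (a b : A) (I : Set V) (pc : V → WeakOrd A) (F : Set (Set V)) :
    Set (Profile V A) :=
  ClassA a b I pc F ∪ ClassB a b I pc F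

/-- The set of indices `λ < β` with `P ∈ 𝓟_λ`; its least element is the index `λ(P)`,
and `λ(P) = ∞` corresponds to this set being empty. -/
def idxSet (a b : A) (β : Ordinal.{max u v}) (I : Ordinal.{max u v} → Set V)
    (pc : Ordinal.{max u v} → V → WeakOrd A) (F : Ordinal.{max u v} → Set (Set V))
    (P : Profile V A) : Set Ordinal.{max u v} :=
  {l | l < β ∧ P ∈ PClass a b (I l) (pc l) (F l)}

/-- `⟨(π^λ)_{λ<β}, (F_λ)_{λ<β}⟩` is a double collection with respect to `{a,b}`:
`β ≥ 1`, each `π^λ` (with domain `I_λ`) is a partial `{a,b}`-indifference profile and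
each `F_λ` is a superset-closed family on `I_λᶜ`. -/
def IsDoubleCollection (a b : A) (β : Ordinal.{max u v}) (I : Ordinal.{max u v} → Set V)
    (pc : Ordinal.{max u v} → V → WeakOrd A) (F : Ordinal.{max u v} → Set (Set V)) : Prop :=
  1 ≤ β ∧ ∀ l < β, (∀ v ∈ I l, Indiff (pc l v) a b) ∧ SSCF (I l)ᶜ (F l)

/-- `ψ` is the ψ-type scf associated with `x` and the double collection: `ψ P = a` if
`P ∈ 𝓟_a(π^{λ(P)},F_{λ(P)})`, `ψ P = b` if `P ∈ 𝓟_b(π^{λ(P)},F_{λ(P)})`, and `ψ P = x`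
if `λ(P) = ∞`. -/
def IsPsiOf (a b x : A) (β : Ordinal.{max u v}) (I : Ordinal.{max u v} → Set V)
    (pc : Ordinal.{max u v} → V → WeakOrd A) (F : Ordinal.{max u v} → Set (Set V))
    (ψ : Profile V A → A) : Prop :=
  ∀ P : Profile V A,
    (∀ l, IsLeast (idxSet a b β I pc F P) l →
      (P ∈ ClassA a b (I l) (pc l) (F l) → ψ P = a) ∧
      (P ∈ ClassB a b (I l) (pc l) (F l) → ψ P = b)) ∧
    (idxSet a b β I pc F P = ∅ → ψ P = x)

section AuxLemmas


/-- From totality: not indifferent and not `b ≻ a` implies `a ≻ b`. -/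
lemma spref_of_not_indiff {a b : A} (W : WeakOrd A)
    (h1 : ¬ Indiff W a b) (h2 : ¬ SPref W b a) : SPref W a b := by
  rcases W.2.1 a b with h | h
  · exact ⟨h, fun hba => h1 ⟨h, hba⟩⟩
  · have hab : W.1 a b := by
      by_contra hh
      exact h2 ⟨h, hh⟩
    exact absurd ⟨hab, h⟩ h1

/-- The central strategy-proofness lemma. -/
lemma key_lemma (a b : A) (hab : a ≠ b) (φ : Profile V A → A) (hcsp : CSP φ)
    (hrange : Set.range φ = {a, b}) (I : Set V) (pc : V → WeakOrd A)
    (P Q' : Profile V A)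
    (h2 : ∀ v ∈ I, P v = pc v ∨ SPref (P v) b a)
    (h3 : ∀ v ∈ I, Q' v = pc v ∨ SPref (Q' v) a b)
    (h4 : φ Q' = b)
    (h5 : ∀ v, v ∉ I → ¬ SPref (P v) b a → SPref (Q' v) a b) :
    φ P = b := by
  classical
  have hmem : ∀ R : Profile V A, φ R = a ∨ φ R = b := by
    intro R
    have : φ R ∈ ({a, b} : Set A) := hrange ▸ Set.mem_range_self R
    simpa using this
  by_contra hP
  have hPa : φ P = a := (hmem P).resolve_right hP
  set D : Set V := (Dset b a P ∩ Iᶜ) ∪ {v | v ∈ I ∧ P v ≠ pc v} with hD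
  have hDpref : ∀ v ∈ D, SPref (P v) b a := by
    intro v hv
    rcases hv with hv | hv
    · exact hv.1
    · exact (h2 v hv.1).resolve_left hv.2
  set R : Profile V A := fun v => if v ∈ D then Q' v else P v with hR
  have hRoff : ∀ v, v ∉ D → R v = P v := fun v hv => if_neg hv
  have hRon : ∀ v, v ∈ D → R v = Q' v := fun v hv => if_pos hv
  rcases hmem R with hRa | hRb
  · -- φ R = a : the coalition of voters changed between Q' and R manipulates Q'.
    set C : Set V := {v | R v ≠ Q' v} with hC
    have hCD : ∀ v ∈ C, v ∉ D := fun v hv hvD => hv (hRon v hvD)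
    have hCne : C.Nonempty := by
      by_contra hne
      rw [Set.not_nonempty_iff_eq_empty] at hne
      have : R = Q' := by
        funext v
        by_contra hv
        exact absurd (show v ∈ C from hv) (hne ▸ Set.notMem_empty v)
      rw [← this, hRa] at h4
      exact hab h4
    refine hcsp C Q' ⟨hCne, R, fun v hv => not_not.1 hv, ?_⟩
    intro v hv
    rw [hRa, h4]
    have hvD : v ∉ D := hCD v hv
    by_cases hvI : v ∈ I
    · have hPpc : P v = pc v := by
        by_contra hh
        exact hvD (Or.inr ⟨hvI, hh⟩)
      rcases h3 v hvI with hq | hq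
      · exact absurd (by rw [hRoff v hvD, hPpc, hq]) hv
      · exact hq
    · have hnb : ¬ SPref (P v) b a := by
        intro hh
        exact hvD (Or.inl ⟨hh, hvI⟩)
      exact h5 v hvI hnb
  · -- φ R = b : the coalition D manipulates P.
    have hDne : D.Nonempty := by
      by_contra hne
      rw [Set.not_nonempty_iff_eq_empty] at hne
      have : R = P := by
        funext v
        exact hRoff v (hne ▸ Set.notMem_empty v)
      rw [this, hPa] at hRb
      exact hab hRb
    refine hcsp D P ⟨hDne, R, fun v hv => hRoff v hv, ?_⟩
    intro v hv
    rw [hRb, hPa]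
    exact hDpref v hv

/-- The "a-side" superset-closed family associated with `(I, pc)`. -/
def famA (φ : Profile V A → A) (a b : A) (I : Set V) (pc : V → WeakOrd A) : Set (Set V) :=
  {E | E ⊆ Iᶜ ∧ ∀ P : Profile V A,
    (∀ v ∈ I, P v = pc v ∨ SPref (P v) a b) → E ⊆ Dset a b P → φ P = a}

/-- The "b-side" family: the family whose dual is `famA φ b a I pc`. -/
def famB (φ : Profile V A → A) (a b : A) (I : Set V) (pc : V → WeakOrd A) : Set (Set V) :=
  {E | E ⊆ Iᶜ ∧ Iᶜ \ E ∉ famA φ b a I pc}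

lemma sscf_famA (φ : Profile V A → A) (a b : A) (I : Set V) (pc : V → WeakOrd A) :
    SSCF Iᶜ (famA φ a b I pc) := by
  refine ⟨fun E hE => hE.1, fun E₁ E₂ h1 h12 h2c => ⟨h2c, fun P hconf hsub => ?_⟩⟩
  exact h1.2 P hconf (h12.trans hsub)

lemma sscf_famB (φ : Profile V A → A) (a b : A) (I : Set V) (pc : V → WeakOrd A) :
    SSCF Iᶜ (famB φ a b I pc) := by
  refine ⟨fun E hE => hE.1, fun E₁ E₂ h1 h12 h2c => ⟨h2c, fun hmem => h1.2 ?_⟩⟩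
  exact (sscf_famA φ b a I pc).2 (Iᶜ \ E₂) (Iᶜ \ E₁) hmem
    (fun v hv => ⟨hv.1, fun hh => hv.2 (h12 hh)⟩) Set.diff_subset

lemma dual_famB (φ : Profile V A → A) (a b : A) (I : Set V) (pc : V → WeakOrd A) :
    dualF Iᶜ (famB φ a b I pc) = famA φ b a I pc := by
  ext E
  constructor
  · rintro ⟨hEsub, hnot⟩
    by_contra hE
    refine hnot ⟨Set.diff_subset, ?_⟩
    rw [Set.diff_diff_cancel_left hEsub]
    exact hE
  · intro hE
    refine ⟨hE.1, fun hmem => ?_⟩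
    refine hmem.2 ?_
    rw [Set.diff_diff_cancel_left hE.1]
    exact hE

lemma classA_famA (φ : Profile V A → A) (a b : A) (I : Set V) (pc : V → WeakOrd A)
    (P : Profile V A) (hP : P ∈ ClassA a b I pc (famA φ a b I pc)) : φ P = a :=
  hP.1.2 P hP.2 Set.inter_subset_left

lemma classB_famB (φ : Profile V A → A) (a b : A) (I : Set V) (pc : V → WeakOrd A)
    (P : Profile V A) (hP : P ∈ ClassB a b I pc (famB φ a b I pc)) : φ P = b := by
  have hdual := hP.1
  rw [dual_famB] at hdual
  exact hdual.2 P hP.2 Set.inter_subset_left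

lemma classB_famA (a b : A) (hab : a ≠ b) (φ : Profile V A → A) (hcsp : CSP φ)
    (hrange : Set.range φ = {a, b}) (I : Set V) (pc : V → WeakOrd A)
    (P : Profile V A) (hP : P ∈ ClassB a b I pc (famA φ a b I pc)) : φ P = b := by
  obtain ⟨⟨hsub, hnot⟩, hconf⟩ := hP
  rw [famA, Set.mem_setOf_eq] at hnot
  push_neg at hnot
  obtain ⟨Q', hconf', hsub', hne⟩ := hnot Set.diff_subset
  have hQ'b : φ Q' = b := by
    have : φ Q' ∈ ({a, b} : Set A) := hrange ▸ Set.mem_range_self Q'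
    simpa [hne] using this
  refine key_lemma a b hab φ hcsp hrange I pc P Q' hconf hconf' hQ'b ?_
  intro v hvI hvn
  exact hsub' ⟨hvI, fun hh => hvn hh.1⟩

lemma classA_famB (a b : A) (hab : a ≠ b) (φ : Profile V A → A) (hcsp : CSP φ)
    (hrange : Set.range φ = {a, b}) (I : Set V) (pc : V → WeakOrd A)
    (P : Profile V A) (hP : P ∈ ClassA a b I pc (famB φ a b I pc)) : φ P = a := by
  obtain ⟨⟨hsub, hnot⟩, hconf⟩ := hP
  rw [famA, Set.mem_setOf_eq] at hnot
  push_neg at hnot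
  obtain ⟨Q', hconf', hsub', hne⟩ := hnot Set.diff_subset
  have hQ'a : φ Q' = a := by
    have : φ Q' ∈ ({a, b} : Set A) := hrange ▸ Set.mem_range_self Q'
    simpa [hne] using this
  refine key_lemma b a hab.symm φ hcsp (hrange.trans (Set.pair_comm a b)) I pc P Q'
    hconf hconf' hQ'a ?_
  intro v hvI hvn
  exact hsub' ⟨hvI, fun hh => hvn hh.1⟩

lemma mem_classA (a b : A) (hab : a ≠ b) (φ : Profile V A → A) (hcsp : CSP φ)
    (hrange : Set.range φ = {a, b}) (Q : Profile V A) (hQ : φ Q = a) :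
    Q ∈ ClassA a b (Iset a b Q) Q (famA φ a b (Iset a b Q) Q) := by
  refine ⟨⟨Set.inter_subset_right, fun P hconf hsub => ?_⟩, fun v _ => Or.inl rfl⟩
  refine key_lemma b a hab.symm φ hcsp (hrange.trans (Set.pair_comm a b)) (Iset a b Q) Q
    P Q hconf (fun v _ => Or.inl rfl) hQ ?_
  intro v hvI hvP
  by_contra hQv
  have hsa : SPref (Q v) a b := spref_of_not_indiff (Q v) hvI hQv
  exact hvP (hsub ⟨hsa, hvI⟩)

lemma mem_classB (a b : A) (hab : a ≠ b) (φ : Profile V A → A) (hcsp : CSP φ)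
    (hrange : Set.range φ = {a, b}) (Q : Profile V A) (hQ : φ Q = b) :
    Q ∈ ClassB a b (Iset a b Q) Q (famB φ a b (Iset a b Q) Q) := by
  refine ⟨?_, fun v _ => Or.inl rfl⟩
  show Dset b a Q ∩ (Iset a b Q)ᶜ ∈ dualF (Iset a b Q)ᶜ (famB φ a b (Iset a b Q) Q)
  rw [dual_famB]
  refine ⟨Set.inter_subset_right, fun P hconf hsub => ?_⟩
  refine key_lemma a b hab φ hcsp hrange (Iset a b Q) Q P Q hconf (fun v _ => Or.inl rfl) hQ ?_
  intro v hvI hvP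
  by_contra hQv
  have hsb : SPref (Q v) b a :=
    spref_of_not_indiff (Q v) (fun h => hvI ⟨h.2, h.1⟩) hQv
  exact hvP (hsub ⟨hsb, hvI⟩)

end AuxLemmas

/-- Theorem 4.5 (structure/representation theorem): every CSP scf with range `{a,b}`
of cardinality two is the ψ-type scf associated with `x = φ(π)` (for `π` a profile of
unanimous indifference between `a` and `b`) and a suitable double collection; moreover
`F₀` and its dual `F₀°` are both nonempty (they consist of coalitions), and the
indexing ordinal `β` is finite whenever both `V` and `A` are finite. -/

theorem representation_theorem (a b : A) (hab : a ≠ b)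
    (φ : Profile V A → A) (hcsp : CSP φ) (hrange : Set.range φ = {a, b})
    (pu : Profile V A) (hpu : ∀ v, Indiff (pu v) a b) (x : A) (hx : x = φ pu) :
    ∃ (β : Ordinal.{max u v}) (I : Ordinal.{max u v} → Set V)
      (pc : Ordinal.{max u v} → V → WeakOrd A) (F : Ordinal.{max u v} → Set (Set V)),
      IsDoubleCollection a b β I pc F ∧
      IsPsiOf a b x β I pc F φ ∧
      (F 0).Nonempty ∧ ∅ ∉ F 0 ∧
      (dualF (I 0)ᶜ (F 0)).Nonempty ∧ ∅ ∉ dualF (I 0)ᶜ (F 0) ∧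
      (Finite V → Finite A → β < Ordinal.omega0.{max u v}) := by
  classical
  have hmemr : ∀ R : Profile V A, φ R = a ∨ φ R = b := by
    intro R
    have : φ R ∈ ({a, b} : Set A) := hrange ▸ Set.mem_range_self R
    simpa using this
  obtain ⟨Pa, hPa⟩ : ∃ P : Profile V A, φ P = a := by
    have : a ∈ Set.range φ := by rw [hrange]; exact Set.mem_insert a _
    exact this
  obtain ⟨Pb, hPb⟩ : ∃ P : Profile V A, φ P = b := by
    have : b ∈ Set.range φ := by rw [hrange]; exact Set.mem_insert_of_mem a rfl
    exact this
  -- a well-ordering of the profiles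
  let rel : Profile V A → Profile V A → Prop := WellOrderingRel
  let o : Ordinal.{max u v} := Ordinal.type rel
  let ι : Profile V A → Ordinal.{max u v} := fun Q => 1 + Ordinal.typein rel Q
  have hι_lt : ∀ Q, ι Q < 1 + o := fun Q =>
    (add_lt_add_iff_left (1 : Ordinal.{max u v})).2 (Ordinal.typein_lt_type rel Q)
  have hι_inj : Function.Injective ι := fun Q₁ Q₂ h =>
    Ordinal.typein_injective rel ((add_right_inj (1 : Ordinal.{max u v})).1 h)
  have hι_ne0 : ∀ Q, ι Q ≠ 0 := fun Q h => by
    have h1 : (1 : Ordinal.{max u v}) ≤ ι Q := le_self_add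
    rw [h] at h1
    exact absurd h1 (by simp)
  -- the double collection
  let Idx : Ordinal.{max u v} → Set V := fun l =>
    if h : ∃ Q : Profile V A, ι Q = l then Iset a b h.choose else ∅
  let pcf : Ordinal.{max u v} → V → WeakOrd A := fun l =>
    if h : ∃ Q : Profile V A, ι Q = l then h.choose else pu
  let Ff : Ordinal.{max u v} → Set (Set V) := fun l =>
    if h : ∃ Q : Profile V A, ι Q = l then
      (if φ h.choose = a then famA φ a b (Iset a b h.choose) h.choose
       else famB φ a b (Iset a b h.choose) h.choose)
    else famA φ a b (∅ : Set V) pu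
  have h0 : ¬ ∃ Q : Profile V A, ι Q = (0 : Ordinal.{max u v}) := fun ⟨Q, hQ⟩ => hι_ne0 Q hQ
  have hI0 : Idx 0 = (∅ : Set V) := dif_neg h0
  have hF0 : Ff 0 = famA φ a b (∅ : Set V) pu := dif_neg h0
  -- soundness of every class
  have sound : ∀ (l : Ordinal.{max u v}) (P : Profile V A),
      (P ∈ ClassA a b (Idx l) (pcf l) (Ff l) → φ P = a) ∧
      (P ∈ ClassB a b (Idx l) (pcf l) (Ff l) → φ P = b) := by
    intro l P
    by_cases h : ∃ Q : Profile V A, ι Q = l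
    · rw [show Idx l = Iset a b h.choose from dif_pos h,
        show pcf l = h.choose from dif_pos h]
      by_cases hQa : φ h.choose = a
      · rw [show Ff l = famA φ a b (Iset a b h.choose) h.choose from
          (dif_pos h).trans (if_pos hQa)]
        exact ⟨classA_famA φ a b _ _ P, classB_famA a b hab φ hcsp hrange _ _ P⟩
      · rw [show Ff l = famB φ a b (Iset a b h.choose) h.choose from
          (dif_pos h).trans (if_neg hQa)]
        exact ⟨classA_famB a b hab φ hcsp hrange _ _ P, classB_famB φ a b _ _ P⟩
    · rw [show Idx l = (∅ : Set V) from dif_neg h, show pcf l = pu from dif_neg h,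
        show Ff l = famA φ a b (∅ : Set V) pu from dif_neg h]
      exact ⟨classA_famA φ a b _ _ P, classB_famA a b hab φ hcsp hrange _ _ P⟩
  -- the key facts about `F 0`
  have huniv : Set.univ ∈ famA φ a b (∅ : Set V) pu := by
    refine ⟨by simp, fun P hconf hsub => ?_⟩
    refine key_lemma b a hab.symm φ hcsp (hrange.trans (Set.pair_comm a b)) ∅ pu P Pa
      (fun v hv => absurd hv (Set.notMem_empty v))
      (fun v hv => absurd hv (Set.notMem_empty v)) hPa ?_
    intro v _ hv
    exact absurd (hsub (Set.mem_univ v)) hv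
  have hempty : (∅ : Set V) ∉ famA φ a b (∅ : Set V) pu := by
    rintro ⟨-, hall⟩
    have := hall Pb (fun v hv => absurd hv (Set.notMem_empty v)) (Set.empty_subset _)
    exact hab (this.symm.trans hPb)
  refine ⟨1 + o, Idx, pcf, Ff, ⟨le_self_add, fun l _ => ?_⟩, ?_, ?_, ?_, ?_, ?_, ?_⟩
  · -- IsDoubleCollection
    constructor
    · intro v hv
      by_cases h : ∃ Q : Profile V A, ι Q = l
      · rw [show Idx l = Iset a b h.choose from dif_pos h] at hv
        rw [show pcf l = h.choose from dif_pos h]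
        exact hv
      · rw [show Idx l = (∅ : Set V) from dif_neg h] at hv
        exact absurd hv (Set.notMem_empty v)
    · by_cases h : ∃ Q : Profile V A, ι Q = l
      · rw [show Idx l = Iset a b h.choose from dif_pos h]
        by_cases hQa : φ h.choose = a
        · rw [show Ff l = famA φ a b (Iset a b h.choose) h.choose from
            (dif_pos h).trans (if_pos hQa)]
          exact sscf_famA φ a b _ _
        · rw [show Ff l = famB φ a b (Iset a b h.choose) h.choose from
            (dif_pos h).trans (if_neg hQa)]
          exact sscf_famB φ a b _ _
      · rw [show Idx l = (∅ : Set V) from dif_neg h,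
          show Ff l = famA φ a b (∅ : Set V) pu from dif_neg h]
        exact sscf_famA φ a b _ _
  · -- IsPsiOf
    intro P
    constructor
    · intro l _
      exact sound l P
    · intro hidx
      exfalso
      have hx' : ∃ Q : Profile V A, ι Q = ι P := ⟨P, rfl⟩
      have hch : hx'.choose = P := hι_inj hx'.choose_spec
      have hPmem : P ∈ PClass a b (Idx (ι P)) (pcf (ι P)) (Ff (ι P)) := by
        rw [show Idx (ι P) = Iset a b P from (dif_pos hx').trans (by rw [hch]),
          show pcf (ι P) = P from (dif_pos hx').trans hch]
        rcases hmemr P with hPa' | hPb'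
        · rw [show Ff (ι P) = famA φ a b (Iset a b P) P from
            (dif_pos hx').trans (by rw [hch, if_pos hPa'])]
          exact Or.inl (mem_classA a b hab φ hcsp hrange P hPa')
        · have hPna : ¬ φ P = a := fun h => hab (h.symm.trans hPb')
          rw [show Ff (ι P) = famB φ a b (Iset a b P) P from
            (dif_pos hx').trans (by rw [hch, if_neg hPna])]
          exact Or.inr (mem_classB a b hab φ hcsp hrange P hPb')
      have : ι P ∈ idxSet a b (1 + o) Idx pcf Ff P := ⟨hι_lt P, hPmem⟩
      rw [hidx] at this
      exact Set.notMem_empty _ this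
  · -- (F 0).Nonempty
    rw [hF0]
    exact ⟨Set.univ, huniv⟩
  · -- ∅ ∉ F 0
    rw [hF0]
    exact hempty
  · -- dual nonempty
    rw [hI0, hF0]
    refine ⟨Set.univ, ?_, ?_⟩
    · rw [Set.compl_empty]
    · rw [Set.compl_empty, Set.diff_self]
      exact hempty
  · -- ∅ ∉ dual
    rw [hI0, hF0]
    rintro ⟨-, hnot⟩
    refine hnot ?_
    rw [Set.compl_empty, Set.diff_empty]
    exact huniv
  · -- finiteness
    intro hV hA
    haveI := hV
    haveI := hA
    haveI : Fintype (Profile V A) := Fintype.ofFinite _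
    have ho : o = (Fintype.card (Profile V A) : Ordinal.{max u v}) := Ordinal.type_fintype rel
    rw [ho, ← Nat.cast_one (R := Ordinal.{max u v}), ← Nat.cast_add]
    exact Ordinal.nat_lt_omega0 _
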